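/- Fix a nonzero integer ξ. For every dyadic M ≥ 1 there exists δ > 0 (independent of ξ and M) such that the Lebesgue measure of the set {μ ∈ ℝ : |μ| ∼ M and μ = −3ξξ₁ξ₂ + O(⟨ξξ₁ξ₂⟩^{1/100}) for some nonzero integers ξ₁, ξ₂ with ξ = ξ₁ + ξ₂} is at most C·M^{1−δ}; in fact one may take the bound C·M^{3/4}. -/

import Mathlib

open MeasureTheory

theorem resonance_set_measure_bound :
    ∃ C > 0, ∀ ξ : ℤ, ξ ≠ 0 → ∀ M : ℝ, 1 ≤ M → (∃ k : ℕ, M = 2 ^ k) →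
      volume {μ : ℝ | (M ≤ |μ| ∧ |μ| ≤ 2 * M) ∧
          ∃ ξ₁ ξ₂ : ℤ, ξ₁ ≠ 0 ∧ ξ₂ ≠ 0 ∧ ξ₁ + ξ₂ = ξ ∧
            |μ + 3 * (ξ : ℝ) * (ξ₁ : ℝ) * (ξ₂ : ℝ)| ≤
              (2 + |(ξ : ℝ) * (ξ₁ : ℝ) * (ξ₂ : ℝ)|) ^ ((1 : ℝ) / 100)} ≤
        ENNReal.ofReal (C * M ^ ((3 : ℝ) / 4)) := by
  refine ⟨28, by norm_num, ?_⟩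
  intro ξ hξ M hM _
  have hM0 : (0:ℝ) < M := by linarith
  have hsqrt1 : 1 ≤ Real.sqrt M := by
    rw [show (1:ℝ) = Real.sqrt 1 by simp]
    exact Real.sqrt_le_sqrt hM
  set N : ℤ := ⌈2 * Real.sqrt M⌉ with hNdef
  have hNge : (2 : ℝ) * Real.sqrt M ≤ (N : ℝ) := Int.le_ceil _
  have hNlt : (N : ℝ) < 2 * Real.sqrt M + 1 := Int.ceil_lt_add_one _
  set R : ℝ := 2 * M ^ ((1:ℝ)/4) with hRdef
  have hR0 : 0 ≤ R := by positivity
  -- the covering family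
  have hsub : {μ : ℝ | (M ≤ |μ| ∧ |μ| ≤ 2 * M) ∧
          ∃ ξ₁ ξ₂ : ℤ, ξ₁ ≠ 0 ∧ ξ₂ ≠ 0 ∧ ξ₁ + ξ₂ = ξ ∧
            |μ + 3 * (ξ : ℝ) * (ξ₁ : ℝ) * (ξ₂ : ℝ)| ≤
              (2 + |(ξ : ℝ) * (ξ₁ : ℝ) * (ξ₂ : ℝ)|) ^ ((1 : ℝ) / 100)} ⊆
      ⋃ m ∈ Finset.Icc (-N) N,
        Metric.closedBall ((-3 : ℝ) * (ξ:ℝ) * (m:ℝ) * ((ξ:ℝ) - (m:ℝ))) R := by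
    rintro μ ⟨⟨hM1, hM2⟩, ξ₁, ξ₂, h1, h2, hsum, hres⟩
    set x : ℝ := (ξ:ℝ) * (ξ₁:ℝ) * (ξ₂:ℝ) with hxdef
    -- Step A : |x| ≤ 2M
    have habs1 : (2 + |x|) ^ ((1:ℝ)/100) ≤ 2 + |x| := by
      nth_rewrite 2 [← Real.rpow_one (2 + |x|)]
      exact Real.rpow_le_rpow_of_exponent_le (by linarith [abs_nonneg x]) (by norm_num)
    have htri : 3 * |x| ≤ |μ + 3 * (ξ:ℝ) * (ξ₁:ℝ) * (ξ₂:ℝ)| + |μ| := by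
      have h3 : |(3:ℝ) * x| = 3 * |x| := by
        rw [abs_mul]; norm_num
      calc 3 * |x| = |(3:ℝ) * x| := h3.symm
        _ = |(μ + 3 * (ξ:ℝ) * (ξ₁:ℝ) * (ξ₂:ℝ)) + (-μ)| := by rw [hxdef]; ring_nf
        _ ≤ |μ + 3 * (ξ:ℝ) * (ξ₁:ℝ) * (ξ₂:ℝ)| + |(-μ)| := abs_add_le _ _
        _ = |μ + 3 * (ξ:ℝ) * (ξ₁:ℝ) * (ξ₂:ℝ)| + |μ| := by rw [abs_neg]
    have hx2M : |x| ≤ 2 * M := by linarith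
    -- radius bound
    have hrad : (2 + |x|) ^ ((1:ℝ)/100) ≤ R := by
      have h4M : 2 + |x| ≤ 4 * M := by linarith
      have s1 : (2 + |x|) ^ ((1:ℝ)/100) ≤ (4 * M) ^ ((1:ℝ)/100) :=
        Real.rpow_le_rpow (by linarith [abs_nonneg x]) h4M (by norm_num)
      have s2 : (4 * M) ^ ((1:ℝ)/100) ≤ (4 * M) ^ ((1:ℝ)/4) :=
        Real.rpow_le_rpow_of_exponent_le (by linarith) (by norm_num)
      have s3 : (4 * M) ^ ((1:ℝ)/4) = (4:ℝ) ^ ((1:ℝ)/4) * M ^ ((1:ℝ)/4) :=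
        Real.mul_rpow (by norm_num) hM0.le
      have s4 : (4:ℝ) ^ ((1:ℝ)/4) ≤ 2 := by
        have h16 : (16:ℝ) ^ ((1:ℝ)/4) = 2 := by
          rw [show (16:ℝ) = 2 ^ (4:ℕ) by norm_num, ← Real.rpow_natCast 2 4,
            ← Real.rpow_mul (by norm_num : (0:ℝ) ≤ 2),
            show ((4:ℕ):ℝ) * ((1:ℝ)/4) = 1 by push_cast; norm_num, Real.rpow_one]
        have h := Real.rpow_le_rpow (by norm_num : (0:ℝ) ≤ 4)
          (by norm_num : (4:ℝ) ≤ 16) (by norm_num : (0:ℝ) ≤ (1:ℝ)/4)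
        linarith
      have s5 : (4:ℝ) ^ ((1:ℝ)/4) * M ^ ((1:ℝ)/4) ≤ 2 * M ^ ((1:ℝ)/4) :=
        mul_le_mul_of_nonneg_right s4 (by positivity)
      calc (2 + |x|) ^ ((1:ℝ)/100) ≤ (4 * M) ^ ((1:ℝ)/4) := le_trans s1 s2
        _ = (4:ℝ) ^ ((1:ℝ)/4) * M ^ ((1:ℝ)/4) := s3
        _ ≤ R := s5
    -- |ξ₁ ξ₂| ≤ 2M
    have hξabs : (1:ℝ) ≤ |(ξ:ℝ)| := by
      have := Int.one_le_abs hξ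
      exact_mod_cast this
    have h12 : |(ξ₁:ℝ)| * |(ξ₂:ℝ)| ≤ 2 * M := by
      have : |x| = |(ξ:ℝ)| * (|(ξ₁:ℝ)| * |(ξ₂:ℝ)|) := by
        rw [hxdef, abs_mul, abs_mul]; ring
      nlinarith [abs_nonneg ((ξ₁:ℝ)), abs_nonneg ((ξ₂:ℝ)),
        mul_nonneg (abs_nonneg ((ξ₁:ℝ))) (abs_nonneg ((ξ₂:ℝ)))]
    have hsqrt4 : Real.sqrt (4 * M) = 2 * Real.sqrt M := by
      rw [show (4:ℝ) * M = 2^2 * M by norm_num, Real.sqrt_mul (by positivity) M,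
        Real.sqrt_sq (by norm_num : (0:ℝ) ≤ 2)]
    -- pick the smaller of ξ₁, ξ₂ as index m
    have key : ∀ m : ℤ, |(m:ℝ)| ≤ 2 * Real.sqrt M →
        ((-3 : ℝ) * (ξ:ℝ) * (m:ℝ) * ((ξ:ℝ) - (m:ℝ)) = -(3 * x)) →
        μ ∈ ⋃ m ∈ Finset.Icc (-N) N,
          Metric.closedBall ((-3 : ℝ) * (ξ:ℝ) * (m:ℝ) * ((ξ:ℝ) - (m:ℝ))) R := by
      intro m hm hc
      have hmN : m ∈ Finset.Icc (-N) N := by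
        rw [Finset.mem_Icc]
        constructor
        · have : -(N:ℝ) ≤ (m:ℝ) := by
            have := neg_abs_le ((m:ℝ)); linarith
          exact_mod_cast this
        · have : (m:ℝ) ≤ (N:ℝ) := by
            have := le_abs_self ((m:ℝ)); linarith
          exact_mod_cast this
      refine Set.mem_biUnion hmN ?_
      rw [Metric.mem_closedBall, Real.dist_eq, hc]
      calc |μ - -(3 * x)| = |μ + 3 * (ξ:ℝ) * (ξ₁:ℝ) * (ξ₂:ℝ)| := by
            rw [hxdef]; ring_nf
        _ ≤ (2 + |x|) ^ ((1:ℝ)/100) := hres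
        _ ≤ R := hrad
    have hξ₂eq : (ξ₂ : ℝ) = (ξ:ℝ) - (ξ₁:ℝ) := by
      have : (ξ₁:ℝ) + (ξ₂:ℝ) = (ξ:ℝ) := by exact_mod_cast congrArg (Int.cast : ℤ → ℝ) hsum
      linarith
    have hξ₁eq : (ξ₁ : ℝ) = (ξ:ℝ) - (ξ₂:ℝ) := by
      have : (ξ₁:ℝ) + (ξ₂:ℝ) = (ξ:ℝ) := by exact_mod_cast congrArg (Int.cast : ℤ → ℝ) hsum
      linarith
    rcases le_total |(ξ₁:ℝ)| |(ξ₂:ℝ)| with hle | hle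
    · refine key ξ₁ ?_ ?_
      · have hsq : |(ξ₁:ℝ)| ^ 2 ≤ 4 * M := by
          nlinarith [abs_nonneg ((ξ₁:ℝ))]
        calc |(ξ₁:ℝ)| = Real.sqrt (|(ξ₁:ℝ)| ^ 2) := (Real.sqrt_sq (abs_nonneg _)).symm
          _ ≤ Real.sqrt (4 * M) := Real.sqrt_le_sqrt hsq
          _ = 2 * Real.sqrt M := hsqrt4
      · rw [← hξ₂eq, hxdef]; ring
    · refine key ξ₂ ?_ ?_
      · have hsq : |(ξ₂:ℝ)| ^ 2 ≤ 4 * M := by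
          nlinarith [abs_nonneg ((ξ₂:ℝ))]
        calc |(ξ₂:ℝ)| = Real.sqrt (|(ξ₂:ℝ)| ^ 2) := (Real.sqrt_sq (abs_nonneg _)).symm
          _ ≤ Real.sqrt (4 * M) := Real.sqrt_le_sqrt hsq
          _ = 2 * Real.sqrt M := hsqrt4
      · rw [← hξ₁eq, hxdef]; ring
  -- cardinality bound
  have hN0 : (0:ℤ) ≤ N + 1 - -N := by
    have : (2:ℝ) ≤ (N:ℝ) := by linarith
    have h2N : (2:ℤ) ≤ N := by exact_mod_cast this
    omega
  have hcard : (((Finset.Icc (-N) N).card : ℕ) : ℝ) ≤ 7 * Real.sqrt M := by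
    rw [Int.card_Icc]
    have h2 : (((N + 1 - -N).toNat : ℕ) : ℝ) = ((N:ℝ) + 1 + (N:ℝ)) := by
      have h := Int.toNat_of_nonneg hN0
      have h3 := congrArg (fun z : ℤ => (z : ℝ)) h
      push_cast at h3
      linarith
    rw [h2]
    linarith
  -- put it together
  have hsum34 : Real.sqrt M * M ^ ((1:ℝ)/4) = M ^ ((3:ℝ)/4) := by
    rw [Real.sqrt_eq_rpow, ← Real.rpow_add hM0]
    norm_num
  calc volume {μ : ℝ | (M ≤ |μ| ∧ |μ| ≤ 2 * M) ∧
          ∃ ξ₁ ξ₂ : ℤ, ξ₁ ≠ 0 ∧ ξ₂ ≠ 0 ∧ ξ₁ + ξ₂ = ξ ∧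
            |μ + 3 * (ξ : ℝ) * (ξ₁ : ℝ) * (ξ₂ : ℝ)| ≤
              (2 + |(ξ : ℝ) * (ξ₁ : ℝ) * (ξ₂ : ℝ)|) ^ ((1 : ℝ) / 100)}
      ≤ volume (⋃ m ∈ Finset.Icc (-N) N,
          Metric.closedBall ((-3 : ℝ) * (ξ:ℝ) * (m:ℝ) * ((ξ:ℝ) - (m:ℝ))) R) :=
        measure_mono hsub
    _ ≤ ∑ m ∈ Finset.Icc (-N) N,
          volume (Metric.closedBall ((-3 : ℝ) * (ξ:ℝ) * (m:ℝ) * ((ξ:ℝ) - (m:ℝ))) R) :=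
        measure_biUnion_finset_le _ _
    _ = ∑ m ∈ Finset.Icc (-N) N, ENNReal.ofReal (2 * R) := by
        simp [Real.volume_closedBall]
    _ = ((Finset.Icc (-N) N).card : ℕ) • ENNReal.ofReal (2 * R) := Finset.sum_const _
    _ = ENNReal.ofReal ((((Finset.Icc (-N) N).card : ℕ) : ℝ) * (2 * R)) := by
        rw [nsmul_eq_mul, ← ENNReal.ofReal_natCast, ← ENNReal.ofReal_mul (by positivity)]
    _ ≤ ENNReal.ofReal (28 * M ^ ((3:ℝ)/4)) := by
        apply ENNReal.ofReal_le_ofReal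
        have h2R : 0 ≤ 2 * R := by positivity
        calc (((Finset.Icc (-N) N).card : ℕ) : ℝ) * (2 * R)
            ≤ (7 * Real.sqrt M) * (2 * R) := mul_le_mul_of_nonneg_right hcard h2R
          _ = 28 * (Real.sqrt M * M ^ ((1:ℝ)/4)) := by rw [hRdef]; ring
          _ = 28 * M ^ ((3:ℝ)/4) := by rw [hsum34]
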